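/- arXiv:1001.2986 — 3 statements merged into one kernel-verified Lean document; each statement's English description precedes it below -/
import Mathlib

section
/- Let $B > 1$ and let $(\theta_j)$ be nonnegative reals indexed by an integer interval $I = [s_k, s_{k+1}) \cap \mathbb{Z}$. Suppose $B^{-1}\theta_{s_k} \le \theta_j \le B\,\theta_{s_k}$ for all $j \in I$ (with $\theta_{s_k} > 0$). Let $\mathcal{G} \subseteq I$ and let $j_0 = \min(I \cap \mathcal{G})$ exist, and suppose $\sum_{j \in I \setminus \mathcal{G}} \theta_j^2 \le \sum_{j \in I \cap \mathcal{G}} \theta_j^2$. Then $j_0 - s_k \le \frac{B^4}{1+B^4}(s_{k+1} - s_k)$. -/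
open Finset

theorem stmt3 (B : ℝ) (hB : 1 < B) (θ : ℕ → ℝ) (sk sk1 : ℕ) (hlt : sk < sk1)
    (hθpos : 0 < θ sk)
    (hcomp : ∀ j ∈ Finset.Ico sk sk1, B⁻¹ * θ sk ≤ θ j ∧ θ j ≤ B * θ sk)
    (G : Finset ℕ) (j0 : ℕ) (hj0 : j0 ∈ Finset.Ico sk sk1 ∩ G)
    (hj0min : ∀ j ∈ Finset.Ico sk sk1 ∩ G, j0 ≤ j)
    (hgood : ∑ j ∈ Finset.Ico sk sk1 \ G, (θ j) ^ 2
        ≤ ∑ j ∈ Finset.Ico sk sk1 ∩ G, (θ j) ^ 2) :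
    (j0 : ℝ) - sk ≤ B ^ 4 / (1 + B ^ 4) * ((sk1 : ℝ) - sk) := by
  have hBpos : (0 : ℝ) < B := lt_trans one_pos hB
  obtain ⟨hj0I, hj0G⟩ := Finset.mem_inter.mp hj0
  obtain ⟨hskj0, hj0sk1⟩ := Finset.mem_Ico.mp hj0I
  -- lower bound on bad sum
  have hsub : Finset.Ico sk j0 ⊆ Finset.Ico sk sk1 \ G := by
    intro j hj
    obtain ⟨h1, h2⟩ := Finset.mem_Ico.mp hj
    refine Finset.mem_sdiff.mpr ⟨Finset.mem_Ico.mpr ⟨h1, lt_of_lt_of_le h2 (le_of_lt hj0sk1)⟩, ?_⟩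
    intro hjG
    exact absurd (hj0min j (Finset.mem_inter.mpr ⟨Finset.mem_Ico.mpr ⟨h1, lt_of_lt_of_le h2 (le_of_lt hj0sk1)⟩, hjG⟩)) (not_le.mpr h2)
  have hlow : (j0 - sk : ℕ) * (B⁻¹ * θ sk) ^ 2 ≤ ∑ j ∈ Finset.Ico sk sk1 \ G, (θ j) ^ 2 := by
    calc (j0 - sk : ℕ) * (B⁻¹ * θ sk) ^ 2
        = ∑ j ∈ Finset.Ico sk j0, (B⁻¹ * θ sk) ^ 2 := by
          rw [Finset.sum_const, Nat.card_Ico, nsmul_eq_mul]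
      _ ≤ ∑ j ∈ Finset.Ico sk j0, (θ j) ^ 2 := by
          apply Finset.sum_le_sum
          intro j hj
          have hjI : j ∈ Finset.Ico sk sk1 := (Finset.mem_sdiff.mp (hsub hj)).1
          have := (hcomp j hjI).1
          have hnn : 0 ≤ B⁻¹ * θ sk := by positivity
          exact pow_le_pow_left₀ hnn this 2
      _ ≤ ∑ j ∈ Finset.Ico sk sk1 \ G, (θ j) ^ 2 := by
          apply Finset.sum_le_sum_of_subset_of_nonneg hsub
          intro j _ _; positivity
  have hsub2 : Finset.Ico sk sk1 ∩ G ⊆ Finset.Ico j0 sk1 := by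
    intro j hj
    have := hj0min j hj
    exact Finset.mem_Ico.mpr ⟨this, (Finset.mem_Ico.mp (Finset.mem_inter.mp hj).1).2⟩
  have hhigh : ∑ j ∈ Finset.Ico sk sk1 ∩ G, (θ j) ^ 2 ≤ (sk1 - j0 : ℕ) * (B * θ sk) ^ 2 := by
    calc ∑ j ∈ Finset.Ico sk sk1 ∩ G, (θ j) ^ 2
        ≤ ∑ j ∈ Finset.Ico sk sk1 ∩ G, (B * θ sk) ^ 2 := by
          apply Finset.sum_le_sum
          intro j hj
          have hjI := (Finset.mem_inter.mp hj).1
          have := (hcomp j hjI).2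
          have h0 : 0 ≤ θ j := le_trans (by positivity) (hcomp j hjI).1
          exact pow_le_pow_left₀ h0 this 2
      _ ≤ (sk1 - j0 : ℕ) * (B * θ sk) ^ 2 := by
          rw [Finset.sum_const, nsmul_eq_mul]
          have hc : (Finset.Ico sk sk1 ∩ G).card ≤ sk1 - j0 := by
            simpa [Nat.card_Ico] using Finset.card_le_card hsub2
          exact mul_le_mul_of_nonneg_right (Nat.cast_le.mpr hc) (by positivity)
  have key : ((j0 - sk : ℕ) : ℝ) * (B⁻¹ * θ sk) ^ 2 ≤ ((sk1 - j0 : ℕ) : ℝ) * (B * θ sk) ^ 2 :=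
    le_trans hlow (le_trans hgood hhigh)
  have hcast1 : ((j0 - sk : ℕ) : ℝ) = (j0 : ℝ) - sk := by
    rw [Nat.cast_sub hskj0]
  have hcast2 : ((sk1 - j0 : ℕ) : ℝ) = (sk1 : ℝ) - j0 := by
    rw [Nat.cast_sub (le_of_lt hj0sk1)]
  rw [hcast1, hcast2] at key
  have hθ2 : (0:ℝ) < θ sk ^ 2 := by positivity
  have hBne : (B:ℝ) ≠ 0 := ne_of_gt hBpos
  have key2 : ((j0 : ℝ) - sk) ≤ B ^ 4 * ((sk1 : ℝ) - j0) := by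
    have h := mul_le_mul_of_nonneg_right key (le_of_lt (by positivity : (0:ℝ) < B ^ 2 / θ sk ^ 2))
    have e1 : ((j0 : ℝ) - sk) * (B⁻¹ * θ sk) ^ 2 * (B ^ 2 / θ sk ^ 2) = (j0 : ℝ) - sk := by
      field_simp
      try ring
    have e2 : ((sk1 : ℝ) - j0) * (B * θ sk) ^ 2 * (B ^ 2 / θ sk ^ 2) = B ^ 4 * ((sk1 : ℝ) - j0) := by
      field_simp
      try ring
    rwa [e1, e2] at h
  have hden : (0:ℝ) < 1 + B ^ 4 := by positivity
  rw [div_mul_eq_mul_div, le_div_iff₀ hden]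
  nlinarith [key2]
end

section
/- Let $B > 1$, $\theta_0^{\max} > 0$, and let $(\theta_i^{\max})_{i \ge 1}$ be positive reals. Suppose there exists a constant $C > 0$ (independent of $B$) such that for all $i \ge 1$: $\theta_i^{\max} \le C\big[ B^{-1/(2s)} B^{-(i-1)/(8s)} \theta_0^{\max} + \sum_{j=1}^{i-1} B^{(j-i)/(2s)} B^{-(j-1)/(8s)} \theta_0^{\max} + B^{-i/(2s)} \theta_0^{\max} \big]$, where $s \ge 1$ is fixed. Then there exists $B_0$ depending only on $C$ and $s$ such that for all $B \ge B_0$ and all $i \ge 1$, $\theta_i^{\max} \le B^{-i/(8s)} \theta_0^{\max}$. -/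
open Finset Filter Real

lemma geomIcc {r : ℝ} (hr : 1 < r) (n : ℕ) :
    ∑ j ∈ Icc 1 n, r ^ j ≤ r ^ (n + 1) / (r - 1) := by
  have hr0 : (0:ℝ) < r - 1 := by linarith
  have hrpos : (0:ℝ) < r := by linarith
  induction n with
  | zero => simp; positivity
  | succ n ih =>
      rw [Finset.sum_Icc_succ_top (Nat.le_add_left 1 n)]
      have h1 : (0:ℝ) ≤ r ^ (n+1) := by positivity
      calc ∑ j ∈ Icc 1 n, r ^ j + r ^ (n+1)
          ≤ r ^ (n+1) / (r-1) + r ^ (n+1) := by linarith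
        _ = r ^ (n+1+1) / (r-1) := by field_simp; ring

theorem stmt4 (C s : ℝ) (hC : 0 < C) (hs : 1 ≤ s) :
    ∃ B0 : ℝ, 1 < B0 ∧ ∀ B : ℝ, B0 ≤ B → ∀ θ : ℕ → ℝ, 0 < θ 0 →
      (∀ i : ℕ, 1 ≤ i → 0 < θ i) →
      (∀ i : ℕ, 1 ≤ i →
        θ i ≤ C * (B ^ (-(1 : ℝ) / (2 * s)) * B ^ (-((i : ℝ) - 1) / (8 * s)) * θ 0
          + (∑ j ∈ Finset.Icc 1 (i - 1),
              B ^ (((j : ℝ) - (i : ℝ)) / (2 * s)) * B ^ (-((j : ℝ) - 1) / (8 * s))) * θ 0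
          + B ^ (-(i : ℝ) / (2 * s)) * θ 0)) →
      ∀ i : ℕ, 1 ≤ i → θ i ≤ B ^ (-(i : ℝ) / (8 * s)) * θ 0 := by
  have hs0 : (0:ℝ) < s := lt_of_lt_of_le one_pos hs
  have hsne : s ≠ 0 := ne_of_gt hs0
  set a : ℝ := 1 / (8 * s) with ha
  have ha0 : 0 < a := by positivity
  have h3 : Tendsto (fun B : ℝ => B ^ (-(3*a))) atTop (nhds 0) :=
    tendsto_rpow_neg_atTop (by positivity)
  have h2 : Tendsto (fun B : ℝ => B ^ (-(2*a))) atTop (nhds 0) :=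
    tendsto_rpow_neg_atTop (by positivity)
  have hg : Tendsto (fun B : ℝ => C * (2 * B ^ (-(3*a)) + B ^ (-(2*a)) / (1 - B ^ (-(3*a)))))
      atTop (nhds 0) := by
    have := (((h3.const_mul 2)).add
      (h2.div (tendsto_const_nhds.sub h3) (by norm_num : (1:ℝ) - 0 ≠ 0))).const_mul C
    simpa using this
  obtain ⟨b, hb⟩ := eventually_atTop.mp
    (Filter.Tendsto.eventually_lt_const (by norm_num : (0:ℝ) < 1) hg)
  refine ⟨max b 2, lt_of_lt_of_le one_lt_two (le_max_right _ _), ?_⟩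
  intro B hB θ hθ0 hθpos hrec i hi
  have hB2 : (2:ℝ) ≤ B := le_trans (le_max_right _ _) hB
  have hB1 : (1:ℝ) < B := by linarith
  have hB0 : (0:ℝ) < B := by linarith
  have hgB : C * (2 * B ^ (-(3*a)) + B ^ (-(2*a)) / (1 - B ^ (-(3*a)))) < 1 :=
    hb B (le_trans (le_max_left _ _) hB)
  have hi1 : (1:ℝ) ≤ (i:ℝ) := by exact_mod_cast hi
  set u : ℝ := B ^ a with hu
  have hu1 : 1 < u := by
    have := (Real.rpow_lt_rpow_left_iff hB1).mpr ha0
    rwa [Real.rpow_zero] at this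
  have hu0 : 0 < u := by linarith
  have hupow : ∀ n : ℕ, B ^ (a * (n:ℝ)) = u ^ n := by
    intro n
    rw [Real.rpow_mul hB0.le, Real.rpow_natCast]
  have hB3a : B ^ (-(3*a)) = (u ^ 3)⁻¹ := by
    rw [show -(3*a) = -(a * ((3:ℕ):ℝ)) by push_cast; ring, Real.rpow_neg hB0.le, hupow]
  have hB2a : B ^ (-(2*a)) = (u ^ 2)⁻¹ := by
    rw [show -(2*a) = -(a * ((2:ℕ):ℝ)) by push_cast; ring, Real.rpow_neg hB0.le, hupow]
  have hBi : B ^ (-(i:ℝ) / (8*s)) = (u ^ i)⁻¹ := by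
    rw [show -(i:ℝ)/(8*s) = -(a * (i:ℝ)) by rw [ha]; ring, Real.rpow_neg hB0.le, hupow]
  set D : ℝ := B ^ (-(i:ℝ) / (8*s)) with hD
  have hD0 : 0 < D := Real.rpow_pos_of_pos hB0 _
  have hB3alt : B ^ (-(3*a)) < 1 :=
    Real.rpow_lt_one_of_one_lt_of_neg hB1 (by linarith)
  have hden : 0 < 1 - B ^ (-(3*a)) := by linarith
  -- term 1
  have claim1 : B ^ (-(1:ℝ)/(2*s)) * B ^ (-((i:ℝ)-1)/(8*s)) = D * B ^ (-(3*a)) := by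
    rw [hD, ← Real.rpow_add hB0, ← Real.rpow_add hB0]
    congr 1
    rw [ha]; field_simp; ring
  -- term 3
  have claim3 : B ^ (-(i:ℝ)/(2*s)) ≤ D * B ^ (-(3*a)) := by
    rw [hD, ← Real.rpow_add hB0]
    apply (Real.rpow_le_rpow_left_iff hB1).mpr
    have he : -(i:ℝ)/(8*s) + -(3*a) = (-(i:ℝ) - 3)/(8*s) := by
      rw [ha]; field_simp; ring
    rw [he, div_le_div_iff₀ (by positivity) (by positivity)]
    nlinarith
  -- sum term
  set r : ℝ := B ^ (3*a) with hrdef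
  have hr1 : 1 < r := by
    have := (Real.rpow_lt_rpow_left_iff hB1).mpr (show (0:ℝ) < 3*a by positivity)
    rwa [Real.rpow_zero] at this
  have hrsub : 0 < r - 1 := by linarith
  have hru : r = u ^ 3 := by
    rw [hrdef, hu, show (3:ℝ)*a = a * ((3:ℕ):ℝ) by push_cast; ring, Real.rpow_mul hB0.le,
      Real.rpow_natCast]
  have hterm : ∀ j ∈ Icc 1 (i-1),
      B ^ (((j:ℝ) - (i:ℝ))/(2*s)) * B ^ (-((j:ℝ)-1)/(8*s))
        = B ^ ((1 - 4*(i:ℝ))*a) * r ^ j := by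
    intro j hj
    rw [hrdef, ← Real.rpow_natCast (B ^ (3*a)) j, ← Real.rpow_mul hB0.le,
      ← Real.rpow_add hB0, ← Real.rpow_add hB0]
    congr 1
    rw [ha]; field_simp; ring
  have hsum1 : (∑ j ∈ Finset.Icc 1 (i-1),
      B ^ (((j:ℝ) - (i:ℝ))/(2*s)) * B ^ (-((j:ℝ)-1)/(8*s)))
        = B ^ ((1 - 4*(i:ℝ))*a) * ∑ j ∈ Icc 1 (i-1), r ^ j := by
    rw [Finset.mul_sum]; exact Finset.sum_congr rfl hterm
  have hgeom : ∑ j ∈ Icc 1 (i-1), r ^ j ≤ r ^ i / (r - 1) := by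
    have h := geomIcc hr1 (i-1)
    rwa [Nat.sub_add_cancel hi] at h
  have hBfac : B ^ ((1 - 4*(i:ℝ))*a) = u * ((u ^ i)⁻¹)^4 := by
    rw [← hupow i, ← Real.rpow_neg hB0.le, hu,
      ← Real.rpow_natCast (B ^ (-(a*(i:ℝ)))) 4, ← Real.rpow_mul hB0.le,
      ← Real.rpow_add hB0]
    congr 1
    push_cast; ring
  have claimS : (∑ j ∈ Finset.Icc 1 (i-1),
      B ^ (((j:ℝ) - (i:ℝ))/(2*s)) * B ^ (-((j:ℝ)-1)/(8*s)))
        ≤ D * (B ^ (-(2*a)) / (1 - B ^ (-(3*a)))) := by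
    rw [hsum1]
    have hpos : (0:ℝ) < B ^ ((1 - 4*(i:ℝ))*a) := Real.rpow_pos_of_pos hB0 _
    calc B ^ ((1 - 4*(i:ℝ))*a) * ∑ j ∈ Icc 1 (i-1), r ^ j
        ≤ B ^ ((1 - 4*(i:ℝ))*a) * (r ^ i / (r - 1)) :=
          mul_le_mul_of_nonneg_left hgeom hpos.le
      _ = D * (B ^ (-(2*a)) / (1 - B ^ (-(3*a)))) := by
          have hden' : (0:ℝ) < 1 - (u^3)⁻¹ := by rw [← hB3a]; exact hden
          have hden3 : (0:ℝ) < u ^ 3 - 1 := by nlinarith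
          rw [hBfac, hB2a, hB3a, hBi, hru]
          have hui : (u:ℝ) ^ i ≠ 0 := by positivity
          field_simp
          ring
  -- combine
  calc θ i ≤ C * (B ^ (-(1:ℝ)/(2*s)) * B ^ (-((i:ℝ)-1)/(8*s)) * θ 0
        + (∑ j ∈ Finset.Icc 1 (i-1),
            B ^ (((j:ℝ) - (i:ℝ))/(2*s)) * B ^ (-((j:ℝ)-1)/(8*s))) * θ 0
        + B ^ (-(i:ℝ)/(2*s)) * θ 0) := hrec i hi
    _ = C * (B ^ (-(1:ℝ)/(2*s)) * B ^ (-((i:ℝ)-1)/(8*s))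
        + (∑ j ∈ Finset.Icc 1 (i-1),
            B ^ (((j:ℝ) - (i:ℝ))/(2*s)) * B ^ (-((j:ℝ)-1)/(8*s)))
        + B ^ (-(i:ℝ)/(2*s))) * θ 0 := by ring
    _ ≤ C * (D * B ^ (-(3*a)) + D * (B ^ (-(2*a)) / (1 - B ^ (-(3*a))))
        + D * B ^ (-(3*a))) * θ 0 := by
        apply mul_le_mul_of_nonneg_right _ hθ0.le
        apply mul_le_mul_of_nonneg_left _ hC.le
        exact add_le_add (add_le_add (le_of_eq claim1) claimS) claim3
    _ = (C * (2 * B ^ (-(3*a)) + B ^ (-(2*a)) / (1 - B ^ (-(3*a))))) * D * θ 0 := by ring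
    _ ≤ 1 * D * θ 0 := by
        apply mul_le_mul_of_nonneg_right _ hθ0.le
        exact mul_le_mul_of_nonneg_right hgB.le hD0.le
    _ = D * θ 0 := by ring
end

section
/- Let $0 < s < d$ and let $\mu$ be the natural measure on the Cantor set $E_N$ with ratios $0 < \lambda_n \le \tau_0 < 1/2$. Let $Q$ be a generation-$n$ cube ($n \ge 1$) with parent $\widehat{Q}$. Then for all $x, x' \in Q$, $\big| \int_{\mathbb{R}^d \setminus Q} K(x-y)\,d\mu(y) - \int_{\mathbb{R}^d \setminus Q} K(x'-y)\,d\mu(y) \big| \le C\, \frac{\ell(Q)}{\ell(\widehat{Q})}\, p(\widehat{Q})$, where $p(\widehat{Q}) = \sum_{P \supseteq \widehat{Q}} \theta(P)\,\ell(\widehat{Q})/\ell(P)$ (sum over ancestor cubes $P$ of $\widehat{Q}$ in the construction, including $\widehat{Q}$), $\theta(P) = \mu(P)/\ell(P)^s$, and $K(x) = x/|x|^{s+1}$. -/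
open MeasureTheory Finset

/-- The generation-`n` cube of the corner Cantor construction in `ℝ^d`. -/
noncomputable def cantorCube (d : ℕ) (ℓ : ℕ → ℝ) (n : ℕ) (ε : Fin n → Fin d → Bool) :
    Set (EuclideanSpace ℝ (Fin d)) :=
  {x | ∀ j : Fin d,
    (∑ i : Fin n, if ε i j then ℓ (i : ℕ) - ℓ ((i : ℕ) + 1) else 0) ≤ x j ∧
    x j ≤ (∑ i : Fin n, if ε i j then ℓ (i : ℕ) - ℓ ((i : ℕ) + 1) else 0) + ℓ n}

/-- The `N`-th generation set `E_N` of the Cantor construction. -/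
noncomputable def cantorE (d : ℕ) (ℓ : ℕ → ℝ) (N : ℕ) : Set (EuclideanSpace ℝ (Fin d)) :=
  ⋃ ε : Fin N → Fin d → Bool, cantorCube d ℓ N ε

/-- The normalized Lebesgue measure on `E_N`. -/
noncomputable def cantorMeasure (d : ℕ) (ℓ : ℕ → ℝ) (N : ℕ) :
    Measure (EuclideanSpace ℝ (Fin d)) :=
  (volume (cantorE d ℓ N))⁻¹ • volume.restrict (cantorE d ℓ N)

/-! ### Auxiliary lemmas -/

lemma my_coord_le_norm (d : ℕ) (x : EuclideanSpace ℝ (Fin d)) (j : Fin d) : |x j| ≤ ‖x‖ := by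
  rw [EuclideanSpace.norm_eq, ← Real.sqrt_sq_eq_abs]
  apply Real.sqrt_le_sqrt
  calc x j ^ 2 = ‖x j‖ ^ 2 := by rw [Real.norm_eq_abs, sq_abs]
    _ ≤ _ := Finset.single_le_sum (f := fun i => ‖x i‖^2) (fun i _ => sq_nonneg _)
        (Finset.mem_univ j)

lemma my_norm_le_sqrt_mul (d : ℕ) (x : EuclideanSpace ℝ (Fin d)) (r : ℝ) (hr : 0 ≤ r)
    (h : ∀ j, |x j| ≤ r) : ‖x‖ ≤ Real.sqrt d * r := by
  rw [EuclideanSpace.norm_eq]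
  have h1 : ∑ i : Fin d, ‖x i‖ ^ 2 ≤ ∑ _i : Fin d, r ^ 2 := by
    apply Finset.sum_le_sum
    intro i _
    rw [Real.norm_eq_abs]
    exact pow_le_pow_left₀ (abs_nonneg _) (h i) 2
  calc Real.sqrt (∑ i : Fin d, ‖x i‖ ^ 2) ≤ Real.sqrt (d * r ^ 2) := by
        apply Real.sqrt_le_sqrt; simpa using h1
    _ = Real.sqrt d * r := by
        rw [Real.sqrt_mul (by positivity), Real.sqrt_sq hr]

noncomputable def nCube (d : ℕ) (ℓ : ℕ → ℝ) (δ : ℕ → Fin d → Bool) (m : ℕ) :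
    Set (EuclideanSpace ℝ (Fin d)) := cantorCube d ℓ m (fun i => δ i)

lemma mem_nCube {d : ℕ} {ℓ : ℕ → ℝ} {δ : ℕ → Fin d → Bool} {m : ℕ}
    {x : EuclideanSpace ℝ (Fin d)} :
    x ∈ nCube d ℓ δ m ↔ ∀ j : Fin d,
      (∑ i ∈ range m, if δ i j then ℓ i - ℓ (i + 1) else 0) ≤ x j ∧
      x j ≤ (∑ i ∈ range m, if δ i j then ℓ i - ℓ (i + 1) else 0) + ℓ m := by
  have hs : ∀ j : Fin d, (∑ i : Fin m, if δ (i:ℕ) j then ℓ (i:ℕ) - ℓ ((i:ℕ) + 1) else 0)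
      = ∑ i ∈ range m, if δ i j then ℓ i - ℓ (i + 1) else 0 := fun j =>
    Fin.sum_univ_eq_sum_range (fun i => if δ i j then ℓ i - ℓ (i + 1) else 0) m
  simp only [nCube, cantorCube, Set.mem_setOf_eq, hs]

lemma cantorCube_eq_nCube {d : ℕ} {ℓ : ℕ → ℝ} {m : ℕ} (ε : Fin m → Fin d → Bool)
    (δ : ℕ → Fin d → Bool) (h : ∀ i : Fin m, δ i = ε i) :
    cantorCube d ℓ m ε = nCube d ℓ δ m := by
  have he : (fun i : Fin m => δ i) = ε := funext h
  rw [nCube, he]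

lemma nCube_congr {d : ℕ} {ℓ : ℕ → ℝ} {δ1 δ2 : ℕ → Fin d → Bool} {m : ℕ}
    (h : ∀ i < m, δ1 i = δ2 i) : nCube d ℓ δ1 m = nCube d ℓ δ2 m := by
  unfold nCube cantorCube
  ext x
  simp only [Set.mem_setOf_eq]
  have hsum : ∀ j : Fin d, (∑ i : Fin m, if δ1 i j then ℓ (i:ℕ) - ℓ ((i:ℕ) + 1) else 0)
      = ∑ i : Fin m, if δ2 i j then ℓ (i:ℕ) - ℓ ((i:ℕ) + 1) else 0 := by
    intro j
    refine Finset.sum_congr rfl fun i _ => ?_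
    rw [h i i.2]
  exact forall_congr' fun j => by rw [hsum j]

lemma cantorCube_measurable {d : ℕ} {ℓ : ℕ → ℝ} {m : ℕ} (ε : Fin m → Fin d → Bool) :
    MeasurableSet (cantorCube d ℓ m ε) := by
  have h : cantorCube d ℓ m ε = ⋂ j : Fin d,
      ((fun x : EuclideanSpace ℝ (Fin d) => x j) ⁻¹'
        Set.Icc (∑ i : Fin m, if ε i j then ℓ (i : ℕ) - ℓ ((i : ℕ) + 1) else 0)
          ((∑ i : Fin m, if ε i j then ℓ (i : ℕ) - ℓ ((i : ℕ) + 1) else 0) + ℓ m)) := by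
    ext x
    simp [cantorCube, Set.mem_iInter, Set.mem_Icc]
  rw [h]
  exact MeasurableSet.iInter fun j => ((measurable_pi_apply j).comp (WithLp.measurable_ofLp 2 _)) measurableSet_Icc

lemma cantorE_measurable {d : ℕ} {ℓ : ℕ → ℝ} {N : ℕ} : MeasurableSet (cantorE d ℓ N) :=
  MeasurableSet.iUnion fun ε => cantorCube_measurable ε

section
variable {d : ℕ} {ℓ : ℕ → ℝ} (hdec : ∀ i, ℓ (i + 1) ≤ ℓ i)

lemma my_ell_anti (hdec : ∀ i, ℓ (i + 1) ≤ ℓ i) : ∀ {a b : ℕ}, a ≤ b → ℓ b ≤ ℓ a := by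
  intro a b h
  induction b with
  | zero => simp_all
  | succ k ih =>
    rcases Nat.lt_or_ge a (k+1) with h'|h'
    · exact le_trans (hdec k) (ih (Nat.lt_succ_iff.mp h'))
    · have : a = k + 1 := le_antisymm h h'
      simp [this]

lemma my_telescope {m k : ℕ} (h : m ≤ k) :
    ∑ i ∈ Finset.Ico m k, (ℓ i - ℓ (i + 1)) = ℓ m - ℓ k := by
  rw [Finset.sum_Ico_eq_sub _ h]
  have t : ∀ n, ∑ i ∈ range n, (ℓ i - ℓ (i + 1)) = ℓ 0 - ℓ n := by
    intro n
    have h2 := Finset.sum_range_sub (fun i => -ℓ i) n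
    simp only [neg_sub_neg] at h2
    linarith [h2]
  rw [t, t]; ring

include hdec in
lemma nCube_subset {δ : ℕ → Fin d → Bool} {m k : ℕ} (h : m ≤ k) :
    nCube d ℓ δ k ⊆ nCube d ℓ δ m := by
  intro x hx
  rw [mem_nCube] at hx ⊢
  intro j
  set f : ℕ → ℝ := fun i => if δ i j then ℓ i - ℓ (i + 1) else 0 with hf
  have hnn : ∀ i, 0 ≤ f i := by
    intro i; simp only [hf]; split
    · linarith [hdec i]
    · exact le_refl 0
  have hsplit : ∑ i ∈ range k, f i = ∑ i ∈ range m, f i + ∑ i ∈ Finset.Ico m k, f i := by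
    rw [Finset.sum_range_add_sum_Ico _ h]
  have hico : ∑ i ∈ Finset.Ico m k, f i ≤ ℓ m - ℓ k := by
    calc ∑ i ∈ Finset.Ico m k, f i ≤ ∑ i ∈ Finset.Ico m k, (ℓ i - ℓ (i + 1)) := by
          apply Finset.sum_le_sum; intro i _
          simp only [hf]; split
          · exact le_refl _
          · linarith [hdec i]
      _ = ℓ m - ℓ k := my_telescope h
  have hico0 : 0 ≤ ∑ i ∈ Finset.Ico m k, f i := Finset.sum_nonneg fun i _ => hnn i
  constructor
  · calc ∑ i ∈ range m, f i ≤ ∑ i ∈ range k, f i := by rw [hsplit]; linarith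
      _ ≤ x j := (hx j).1
  · calc x j ≤ ∑ i ∈ range k, f i + ℓ k := (hx j).2
      _ ≤ ∑ i ∈ range m, f i + ℓ m := by rw [hsplit]; linarith

include hdec in
lemma nCube_sep_core {δ1 δ2 : ℕ → Fin d → Bool} {m : ℕ} {j : Fin d} {i0 : ℕ} (hi0 : i0 ≤ m)
    (ht : δ1 i0 j = true) (hfa : δ2 i0 j = false)
    (hagree : ∀ i < i0, δ1 i j = δ2 i j)
    {x y : EuclideanSpace ℝ (Fin d)}
    (hx : x ∈ nCube d ℓ δ1 (m + 1)) (hy : y ∈ nCube d ℓ δ2 (m + 1)) :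
    ℓ i0 - 2 * ℓ (i0 + 1) ≤ x j - y j := by
  rw [mem_nCube] at hx hy
  set a : ℕ → ℝ := fun i => if δ1 i j then ℓ i - ℓ (i + 1) else 0 with ha
  set b : ℕ → ℝ := fun i => if δ2 i j then ℓ i - ℓ (i + 1) else 0 with hb
  have hxj : ∑ i ∈ range (m + 1), a i ≤ x j := (hx j).1
  have hyj : y j ≤ (∑ i ∈ range (m + 1), b i) + ℓ (m + 1) := (hy j).2
  have hi1 : i0 + 1 ≤ m + 1 := Nat.succ_le_succ hi0
  have hsa : ∑ i ∈ range (m + 1), a i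
      = (∑ i ∈ range i0, a i + a i0) + ∑ i ∈ Finset.Ico (i0 + 1) (m + 1), a i := by
    rw [← Finset.sum_range_succ, Finset.sum_range_add_sum_Ico _ hi1]
  have hsb : ∑ i ∈ range (m + 1), b i
      = (∑ i ∈ range i0, b i + b i0) + ∑ i ∈ Finset.Ico (i0 + 1) (m + 1), b i := by
    rw [← Finset.sum_range_succ, Finset.sum_range_add_sum_Ico _ hi1]
  have hab : ∑ i ∈ range i0, a i = ∑ i ∈ range i0, b i := by
    refine Finset.sum_congr rfl fun i hi => ?_
    simp only [ha, hb, hagree i (Finset.mem_range.mp hi)]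
  have hai0 : a i0 = ℓ i0 - ℓ (i0 + 1) := by simp [ha, ht]
  have hbi0 : b i0 = 0 := by simp [hb, hfa]
  have haico : 0 ≤ ∑ i ∈ Finset.Ico (i0 + 1) (m + 1), a i := by
    apply Finset.sum_nonneg; intro i _
    simp only [ha]; split
    · linarith [hdec i]
    · exact le_refl 0
  have hbico : ∑ i ∈ Finset.Ico (i0 + 1) (m + 1), b i ≤ ℓ (i0 + 1) - ℓ (m + 1) := by
    calc ∑ i ∈ Finset.Ico (i0 + 1) (m + 1), b i
        ≤ ∑ i ∈ Finset.Ico (i0 + 1) (m + 1), (ℓ i - ℓ (i + 1)) := by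
          apply Finset.sum_le_sum; intro i _
          simp only [hb]; split
          · exact le_refl _
          · linarith [hdec i]
      _ = ℓ (i0 + 1) - ℓ (m + 1) := my_telescope hi1
  linarith

include hdec in
lemma nCube_sep {τ0 : ℝ} (hstep : ∀ i, ℓ (i + 1) ≤ τ0 * ℓ i) (hτ : 2 * τ0 ≤ 1)
    {δ1 δ2 : ℕ → Fin d → Bool} {m : ℕ}
    (hne : ∃ i, i ≤ m ∧ ∃ j, δ1 i j ≠ δ2 i j)
    {x y : EuclideanSpace ℝ (Fin d)}
    (hx : x ∈ nCube d ℓ δ1 (m + 1)) (hy : y ∈ nCube d ℓ δ2 (m + 1)) :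
    (1 - 2 * τ0) * ℓ m ≤ ‖x - y‖ := by
  obtain ⟨i, him, j, hij⟩ := hne
  have hP : ∃ i, δ1 i j ≠ δ2 i j := ⟨i, hij⟩
  classical
  set i0 := Nat.find hP with hi0def
  have hi0m : i0 ≤ m := le_trans (Nat.find_min' hP hij) him
  have hd0 : δ1 i0 j ≠ δ2 i0 j := Nat.find_spec hP
  have hagree : ∀ i' < i0, δ1 i' j = δ2 i' j := by
    intro i' hi'
    by_contra hne'
    exact absurd (Nat.find_min' hP hne') (not_le.mpr hi')
  have hkey : ℓ i0 - 2 * ℓ (i0 + 1) ≤ |x j - y j| := by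
    cases h1 : δ1 i0 j <;> cases h2 : δ2 i0 j
    · rw [h1, h2] at hd0; exact absurd rfl hd0
    · have h3 := nCube_sep_core hdec hi0m h2 h1 (fun i' hi' => (hagree i' hi').symm) hy hx
      calc ℓ i0 - 2 * ℓ (i0 + 1) ≤ y j - x j := h3
        _ ≤ |x j - y j| := by rw [abs_sub_comm]; exact le_abs_self _
    · have h3 := nCube_sep_core hdec hi0m h1 h2 hagree hx hy
      exact le_trans h3 (le_abs_self _)
    · rw [h1, h2] at hd0; exact absurd rfl hd0
  have hcoord : |x j - y j| ≤ ‖x - y‖ := by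
    have h4 := my_coord_le_norm d (x - y) j
    rwa [PiLp.sub_apply] at h4
  have hτ0 : (0:ℝ) ≤ 1 - 2 * τ0 := by linarith
  have hℓm : ℓ m ≤ ℓ i0 := my_ell_anti hdec hi0m
  have h5 : (1 - 2 * τ0) * ℓ m ≤ ℓ i0 - 2 * ℓ (i0 + 1) := by
    have h1 : ℓ (i0 + 1) ≤ τ0 * ℓ i0 := hstep i0
    have h2 : (1 - 2 * τ0) * ℓ m ≤ (1 - 2 * τ0) * ℓ i0 :=
      mul_le_mul_of_nonneg_left hℓm hτ0
    nlinarith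
  linarith [le_trans hkey hcoord]

lemma exists_ext {N : ℕ} {y : EuclideanSpace ℝ (Fin d)} (hy : y ∈ cantorE d ℓ N) :
    ∃ δ' : ℕ → Fin d → Bool, y ∈ nCube d ℓ δ' N := by
  obtain ⟨ε', hy'⟩ := Set.mem_iUnion.mp hy
  refine ⟨fun i j => if h : i < N then ε' ⟨i, h⟩ j else false, ?_⟩
  rwa [← cantorCube_eq_nCube ε' _ (fun i => by funext j; simp [i.isLt])]

include hdec in
lemma sep_from_E {τ0 : ℝ} (hstep : ∀ i, ℓ (i + 1) ≤ τ0 * ℓ i) (hτ : 2 * τ0 ≤ 1)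
    {N m : ℕ} (hmN : m + 1 ≤ N) {δ : ℕ → Fin d → Bool} {x y : EuclideanSpace ℝ (Fin d)}
    (hx : x ∈ nCube d ℓ δ (m + 1)) (hyE : y ∈ cantorE d ℓ N)
    (hyQ : y ∉ nCube d ℓ δ (m + 1)) :
    (1 - 2 * τ0) * ℓ m ≤ ‖x - y‖ := by
  obtain ⟨δ', hy'⟩ := exists_ext hyE
  have hy1 : y ∈ nCube d ℓ δ' (m + 1) := nCube_subset hdec hmN hy'
  have hne : ∃ i, i ≤ m ∧ ∃ j, δ i j ≠ δ' i j := by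
    by_contra hcon
    push_neg at hcon
    have heq : nCube d ℓ δ' (m + 1) = nCube d ℓ δ (m + 1) :=
      nCube_congr (fun i hi => funext fun j => (hcon i (Nat.lt_succ_iff.mp hi) j).symm)
    exact hyQ (heq ▸ hy1)
  exact nCube_sep hdec hstep hτ hne hx hy1

include hdec in
lemma exists_level {N n : ℕ} {δ : ℕ → Fin d → Bool} {y : EuclideanSpace ℝ (Fin d)}
    (hyE : y ∈ cantorE d ℓ N) (hyQ : y ∉ nCube d ℓ δ (n + 1)) :
    ∃ m, m ≤ n ∧ y ∈ nCube d ℓ δ m ∧ y ∉ nCube d ℓ δ (m + 1) := by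
  classical
  have hP : ∃ k, y ∉ nCube d ℓ δ (k + 1) := ⟨n, hyQ⟩
  refine ⟨Nat.find hP, Nat.find_min' hP hyQ, ?_, Nat.find_spec hP⟩
  by_cases h0 : Nat.find hP = 0
  · rw [h0]
    obtain ⟨δ', hy'⟩ := exists_ext hyE
    have hy0 : y ∈ nCube d ℓ δ' 0 := nCube_subset hdec (Nat.zero_le N) hy'
    have heq : nCube d ℓ δ' 0 = nCube d ℓ δ 0 :=
      nCube_congr (fun i hi => absurd hi (Nat.not_lt_zero i))
    exact heq ▸ hy0
  · obtain ⟨k, hk⟩ := Nat.exists_eq_succ_of_ne_zero h0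
    rw [hk]
    have hmin := Nat.find_min hP (show k < Nat.find hP by rw [hk]; exact Nat.lt_succ_self k)
    exact not_not.mp hmin

end

lemma rpow_mvi {u v p : ℝ} (hu : 0 < u) (huv : u ≤ v) (hp : 1 ≤ p) :
    v ^ p - u ^ p ≤ p * v ^ (p - 1) * (v - u) := by
  have hv : 0 < v := lt_of_lt_of_le hu huv
  have hx : (-1:ℝ) ≤ u / v - 1 := by
    have : 0 ≤ u / v := by positivity
    linarith
  have hB := one_add_mul_self_le_rpow_one_add hx hp
  rw [show 1 + (u / v - 1) = u / v by ring] at hB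
  rw [Real.div_rpow hu.le hv.le] at hB
  have hvp : 0 < v ^ p := Real.rpow_pos_of_pos hv p
  have hvp1 : v ^ (p - 1) * v = v ^ p := by
    nth_rewrite 2 [← Real.rpow_one v]
    rw [← Real.rpow_add hv]
    ring_nf
  have h2 := mul_le_mul_of_nonneg_right hB hvp.le
  rw [div_mul_cancel₀ _ (ne_of_gt hvp)] at h2
  have key : (1 + p * (u / v - 1)) * v ^ p = v ^ p + p * (u - v) * v ^ (p - 1) := by
    rw [← hvp1]
    field_simp
  rw [key] at h2
  nlinarith [h2]

lemma K_smooth {d : ℕ} {s : ℝ} (hs : 0 < s) {r : ℝ} (hr : 0 < r)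
    (a b : EuclideanSpace ℝ (Fin d)) (hra : r ≤ ‖a‖) (hrb : r ≤ ‖b‖) :
    ‖(‖a‖ ^ (-(s + 1))) • a - (‖b‖ ^ (-(s + 1))) • b‖
      ≤ (s + 2) * ‖a - b‖ / r ^ (s + 1) := by
  set p := s + 1 with hpdef
  have hp1 : (1:ℝ) ≤ p := by simp [hpdef]; linarith
  have hp0 : 0 < p := lt_of_lt_of_le one_pos hp1
  set u := ‖a‖ with hudef
  set v := ‖b‖ with hvdef
  have hu : 0 < u := lt_of_lt_of_le hr hra
  have hv : 0 < v := lt_of_lt_of_le hr hrb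
  have hdecomp : (u ^ (-p)) • a - (v ^ (-p)) • b
      = (u ^ (-p)) • (a - b) + (u ^ (-p) - v ^ (-p)) • b := by
    rw [smul_sub, sub_smul]; abel
  have hrp : 0 < r ^ p := Real.rpow_pos_of_pos hr p
  have hup : 0 < u ^ p := Real.rpow_pos_of_pos hu p
  have hvp : 0 < v ^ p := Real.rpow_pos_of_pos hv p
  have hur : r ^ p ≤ u ^ p := Real.rpow_le_rpow hr.le hra hp0.le
  have hvr : r ^ p ≤ v ^ p := Real.rpow_le_rpow hr.le hrb hp0.le
  have hneg : ∀ w : ℝ, 0 < w → w ^ (-p) = (w ^ p)⁻¹ := fun w hw => by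
    rw [Real.rpow_neg hw.le]
  have hterm1 : u ^ (-p) * ‖a - b‖ ≤ ‖a - b‖ / r ^ p := by
    rw [hneg u hu, div_eq_mul_inv, mul_comm]
    exact mul_le_mul_of_nonneg_left (inv_anti₀ hrp hur) (norm_nonneg _)
  have habs : |v - u| ≤ ‖a - b‖ := by
    calc |v - u| = |‖b‖ - ‖a‖| := rfl
      _ ≤ ‖b - a‖ := abs_norm_sub_norm_le b a
      _ = ‖a - b‖ := norm_sub_rev b a
  have hterm2 : |u ^ (-p) - v ^ (-p)| * v ≤ p * ‖a - b‖ / r ^ p := by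
    have hgen : |u ^ (-p) - v ^ (-p)| * v ≤ p * |v - u| / r ^ p := by
      rcases le_total u v with huv | hvu
      · have hmvi := rpow_mvi hu huv hp1
        have hvp1 : v ^ (p - 1) * v = v ^ p := by
          nth_rewrite 2 [← Real.rpow_one v]
          rw [← Real.rpow_add hv]; ring_nf
        have hle : v ^ (-p) ≤ u ^ (-p) := by
          rw [hneg u hu, hneg v hv]
          exact inv_anti₀ hup (Real.rpow_le_rpow hu.le huv hp0.le)
        rw [abs_of_nonneg (sub_nonneg.mpr hle), abs_of_nonneg (by linarith : (0:ℝ) ≤ v - u)]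
        rw [hneg u hu, hneg v hv]
        have e1 : ((u ^ p)⁻¹ - (v ^ p)⁻¹) * v = (v ^ p - u ^ p) * v / (u ^ p * v ^ p) := by
          field_simp; try ring
        have e2 : (v ^ p - u ^ p) * v / (u ^ p * v ^ p)
            ≤ (p * v ^ (p - 1) * (v - u)) * v / (u ^ p * v ^ p) :=
          div_le_div_of_nonneg_right (mul_le_mul_of_nonneg_right hmvi hv.le)
            (mul_pos hup hvp).le
        have e3 : (p * v ^ (p - 1) * (v - u)) * v / (u ^ p * v ^ p) = p * (v - u) / u ^ p := by
          rw [← hvp1]; field_simp; try ring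
        have e4 : p * (v - u) / u ^ p ≤ p * (v - u) / r ^ p :=
          div_le_div_of_nonneg_left (by nlinarith) hrp hur
        calc ((u ^ p)⁻¹ - (v ^ p)⁻¹) * v
            = (v ^ p - u ^ p) * v / (u ^ p * v ^ p) := e1
          _ ≤ (p * v ^ (p - 1) * (v - u)) * v / (u ^ p * v ^ p) := e2
          _ = p * (v - u) / u ^ p := e3
          _ ≤ p * (v - u) / r ^ p := e4
      · have hmvi := rpow_mvi hv hvu hp1
        have hup1 : u ^ (p - 1) * u = u ^ p := by
          nth_rewrite 2 [← Real.rpow_one u]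
          rw [← Real.rpow_add hu]; ring_nf
        have hvv : v ^ (p - 1) * v = v ^ p := by
          nth_rewrite 2 [← Real.rpow_one v]
          rw [← Real.rpow_add hv]; ring_nf
        have hle : u ^ (-p) ≤ v ^ (-p) := by
          rw [hneg u hu, hneg v hv]
          exact inv_anti₀ hvp (Real.rpow_le_rpow hv.le hvu hp0.le)
        have hvpm : 0 < v ^ (p - 1) := Real.rpow_pos_of_pos hv _
        have hrpm : 0 < r ^ (p - 1) := Real.rpow_pos_of_pos hr _
        have hvrm : r ^ (p - 1) ≤ v ^ (p - 1) := Real.rpow_le_rpow hr.le hrb (by linarith)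
        rw [abs_of_nonpos (sub_nonpos.mpr hle), abs_of_nonpos (by linarith : v - u ≤ (0:ℝ))]
        rw [hneg u hu, hneg v hv]
        have e1 : -((u ^ p)⁻¹ - (v ^ p)⁻¹) * v = (u ^ p - v ^ p) * v / (u ^ p * v ^ p) := by
          field_simp; try ring
        have e2 : (u ^ p - v ^ p) * v / (u ^ p * v ^ p)
            ≤ (p * u ^ (p - 1) * (u - v)) * v / (u ^ p * v ^ p) :=
          div_le_div_of_nonneg_right (mul_le_mul_of_nonneg_right hmvi hv.le)
            (mul_pos hup hvp).le
        have e3 : (p * u ^ (p - 1) * (u - v)) * v / (u ^ p * v ^ p)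
            = p * (u - v) / (u * v ^ (p - 1)) := by
          rw [← hup1, ← hvv]; field_simp; try ring
        have e4 : p * (u - v) / (u * v ^ (p - 1)) ≤ p * (u - v) / r ^ p := by
          have hrr : r ^ p ≤ u * v ^ (p - 1) := by
            have hsplit : r ^ p = r * r ^ (p - 1) := by
              nth_rewrite 1 [show p = 1 + (p - 1) by ring]
              rw [Real.rpow_add hr, Real.rpow_one]
            rw [hsplit]
            exact mul_le_mul hra hvrm hrpm.le hu.le
          exact div_le_div_of_nonneg_left (by nlinarith) hrp hrr
        calc -((u ^ p)⁻¹ - (v ^ p)⁻¹) * v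
            = (u ^ p - v ^ p) * v / (u ^ p * v ^ p) := e1
          _ ≤ (p * u ^ (p - 1) * (u - v)) * v / (u ^ p * v ^ p) := e2
          _ = p * (u - v) / (u * v ^ (p - 1)) := e3
          _ ≤ p * (u - v) / r ^ p := e4
          _ = p * -(v - u) / r ^ p := by ring
    calc |u ^ (-p) - v ^ (-p)| * v ≤ p * |v - u| / r ^ p := hgen
      _ ≤ p * ‖a - b‖ / r ^ p := by
        apply div_le_div_of_nonneg_right _ hrp.le
        exact mul_le_mul_of_nonneg_left habs hp0.le
  calc ‖(u ^ (-p)) • a - (v ^ (-p)) • b‖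
      = ‖(u ^ (-p)) • (a - b) + (u ^ (-p) - v ^ (-p)) • b‖ := by rw [hdecomp]
    _ ≤ ‖(u ^ (-p)) • (a - b)‖ + ‖(u ^ (-p) - v ^ (-p)) • b‖ := norm_add_le _ _
    _ = u ^ (-p) * ‖a - b‖ + |u ^ (-p) - v ^ (-p)| * v := by
        rw [norm_smul, norm_smul, Real.norm_eq_abs, Real.norm_eq_abs,
          abs_of_nonneg (Real.rpow_nonneg hu.le _)]
    _ ≤ ‖a - b‖ / r ^ p + p * ‖a - b‖ / r ^ p := add_le_add hterm1 hterm2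
    _ = (s + 2) * ‖a - b‖ / r ^ p := by rw [hpdef]; ring

lemma measurable_norm_rpow {α : Type*} [MeasurableSpace α] {E : Type*}
    [NormedAddCommGroup E] [MeasurableSpace E] [BorelSpace E]
    {f : α → E} (hf : Measurable f) (c : ℝ) :
    Measurable fun y => ‖f y‖ ^ c := by
  have heq : (fun y => ‖f y‖ ^ c)
      = fun y => if ‖f y‖ = 0 then (if c = 0 then 1 else 0)
        else Real.exp (Real.log ‖f y‖ * c) := by
    funext y
    by_cases h0 : ‖f y‖ = 0
    · rw [h0]
      by_cases hc : c = 0 <;> simp [hc, Real.zero_rpow, if_pos h0]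
    · rw [if_neg h0, Real.rpow_def_of_pos (lt_of_le_of_ne (norm_nonneg _) (Ne.symm h0))]
  rw [heq]
  exact Measurable.ite (hf.norm (measurableSet_singleton 0)) measurable_const
    (((Real.measurable_log.comp hf.norm).mul measurable_const).exp)

theorem stmt9 (d : ℕ) (hd : 1 ≤ d) (s τ0 : ℝ) (hs0 : 0 < s) (hsd : s < d)
    (hτ0 : 0 < τ0) (hτ : τ0 < 1 / 2) :
    ∃ C : ℝ, 0 < C ∧
      ∀ (lam : ℕ → ℝ), (∀ n, 0 < lam n ∧ lam n ≤ τ0) →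
      ∀ (ℓ : ℕ → ℝ), ℓ 0 = 1 → (∀ n, ℓ (n + 1) = lam (n + 1) * ℓ n) →
      ∀ (N n : ℕ), n + 1 ≤ N →
      ∀ (ε : Fin (n + 1) → Fin d → Bool),
      ∀ x ∈ cantorCube d ℓ (n + 1) ε, ∀ x' ∈ cantorCube d ℓ (n + 1) ε,
        ‖(∫ y in (cantorCube d ℓ (n + 1) ε)ᶜ,
              (‖x - y‖ ^ (-(s + 1))) • (x - y) ∂(cantorMeasure d ℓ N)) -
          (∫ y in (cantorCube d ℓ (n + 1) ε)ᶜ,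
              (‖x' - y‖ ^ (-(s + 1))) • (x' - y) ∂(cantorMeasure d ℓ N))‖
          ≤ C * (ℓ (n + 1) / ℓ n) *
            ∑ m ∈ (range (n + 1)).attach,
              ((cantorMeasure d ℓ N (cantorCube d ℓ (m : ℕ)
                  (fun i => ε ⟨(i : ℕ),
                    lt_trans i.2 (Finset.mem_range.mp m.2)⟩))).toReal / ℓ (m : ℕ) ^ s) *
                (ℓ n / ℓ (m : ℕ)) := by
  classical
  have h2τ : (0:ℝ) < 1 - 2 * τ0 := by linarith
  have hdpos : (0:ℝ) < Real.sqrt d := Real.sqrt_pos.mpr (by exact_mod_cast Nat.pos_of_ne_zero (by omega))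
  set C : ℝ := Real.sqrt d * (s + 2) / (1 - 2 * τ0) ^ (s + 1) with hCdef
  have hC : 0 < C := by
    apply div_pos (mul_pos hdpos (by linarith)) (Real.rpow_pos_of_pos h2τ _)
  refine ⟨C, hC, ?_⟩
  intro lam hlam ℓ hℓ0 hℓrec N n hnN ε x hx x' hx'
  -- basic facts about ℓ
  have hpos : ∀ i, 0 < ℓ i := by
    intro i
    induction i with
    | zero => rw [hℓ0]; norm_num
    | succ k ih => rw [hℓrec]; exact mul_pos (hlam _).1 ih
  have hstep : ∀ i, ℓ (i + 1) ≤ τ0 * ℓ i := fun i => by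
    rw [hℓrec]; exact mul_le_mul_of_nonneg_right (hlam _).2 (hpos i).le
  have hdec : ∀ i, ℓ (i + 1) ≤ ℓ i := fun i =>
    le_trans (hstep i) (by nlinarith [hpos i])
  -- the pattern extended to all generations
  set δ : ℕ → Fin d → Bool := fun i j => if h : i < n + 1 then ε ⟨i, h⟩ j else false with hδ
  have hQeq : cantorCube d ℓ (n + 1) ε = nCube d ℓ δ (n + 1) := by
    apply cantorCube_eq_nCube
    intro i
    funext j
    simp only [hδ, i.isLt, dif_pos, Fin.eta]
  have hQmeas : ∀ m : ℕ, MeasurableSet (nCube d ℓ δ m) := fun m =>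
    cantorCube_measurable _
  set E := cantorE d ℓ N with hE
  set μ := cantorMeasure d ℓ N with hμ
  have hEmeas : MeasurableSet E := cantorE_measurable
  -- summands on the right-hand side
  have hsummand : ∀ m : {k // k ∈ range (n + 1)},
      cantorCube d ℓ (m : ℕ) (fun i => ε ⟨(i : ℕ), lt_trans i.2 (Finset.mem_range.mp m.2)⟩)
        = nCube d ℓ δ (m : ℕ) := by
    intro m
    apply cantorCube_eq_nCube
    intro i
    funext j
    have hin : (i : ℕ) < n + 1 := lt_trans i.2 (Finset.mem_range.mp m.2)
    simp only [hδ, hin, dif_pos]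
  have hRHSsum : ∑ m ∈ (range (n + 1)).attach,
        ((μ (cantorCube d ℓ (m : ℕ) (fun i => ε ⟨(i : ℕ),
          lt_trans i.2 (Finset.mem_range.mp m.2)⟩))).toReal / ℓ (m : ℕ) ^ s) * (ℓ n / ℓ (m : ℕ))
      = ∑ m ∈ range (n + 1), ((μ (nCube d ℓ δ m)).toReal / ℓ m ^ s) * (ℓ n / ℓ m) := by
    rw [← Finset.sum_attach (range (n + 1))
      (fun m => ((μ (nCube d ℓ δ m)).toReal / ℓ m ^ s) * (ℓ n / ℓ m))]
    exact Finset.sum_congr rfl fun m _ => by rw [hsummand m]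
  -- nonnegativity of the right-hand side sum
  have hsum_nonneg : 0 ≤ ∑ m ∈ range (n + 1),
      ((μ (nCube d ℓ δ m)).toReal / ℓ m ^ s) * (ℓ n / ℓ m) := by
    apply Finset.sum_nonneg
    intro m _
    apply mul_nonneg
    · exact div_nonneg ENNReal.toReal_nonneg (Real.rpow_nonneg (hpos m).le s)
    · exact div_nonneg (hpos n).le (hpos m).le
  rw [hQeq, hRHSsum]
  -- trivial case: E has measure zero
  by_cases hE0 : volume E = 0
  · have hμ0 : μ = 0 := by
      rw [hμ, cantorMeasure, Measure.restrict_eq_zero.mpr hE0, smul_zero]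
    rw [hμ0]
    simp only [Measure.restrict_zero, integral_zero_measure, sub_zero, norm_zero]
    have : ∀ m, ((0 : Measure (EuclideanSpace ℝ (Fin d))) (nCube d ℓ δ m)) = 0 := fun m => rfl
    apply mul_nonneg (mul_nonneg hC.le (div_nonneg (hpos _).le (hpos _).le))
    apply Finset.sum_nonneg
    intro m _
    apply mul_nonneg
    · exact div_nonneg ENNReal.toReal_nonneg (Real.rpow_nonneg (hpos m).le s)
    · exact div_nonneg (hpos n).le (hpos m).le
  -- main case
  have hEbdd : E ⊆ Metric.closedBall 0 (Real.sqrt d * ℓ 0) := by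
    intro y hy
    obtain ⟨δ', hy'⟩ := exists_ext hy
    have hy0 : y ∈ nCube d ℓ δ' 0 := nCube_subset hdec (Nat.zero_le N) hy'
    rw [mem_nCube] at hy0
    rw [Metric.mem_closedBall, dist_zero_right]
    apply my_norm_le_sqrt_mul d y (ℓ 0) (hpos 0).le
    intro j
    have := hy0 j
    simp only [Finset.range_zero, Finset.sum_empty, zero_add] at this
    rw [abs_le]
    constructor <;> linarith [this.1, this.2]
  have hEtop : volume E ≠ ⊤ :=
    ne_top_of_le_ne_top measure_closedBall_lt_top.ne (measure_mono hEbdd)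
  haveI hfin : IsFiniteMeasure μ := by
    constructor
    rw [hμ, cantorMeasure, Measure.smul_apply, Measure.restrict_apply MeasurableSet.univ,
      Set.univ_inter, smul_eq_mul, ENNReal.inv_mul_cancel hE0 hEtop]
    exact ENNReal.one_lt_top
  have hμEc : μ Eᶜ = 0 := by
    rw [hμ, cantorMeasure, Measure.smul_apply, Measure.restrict_apply hEmeas.compl,
      Set.compl_inter_self, measure_empty, smul_eq_mul, mul_zero]
  set Q : Set (EuclideanSpace ℝ (Fin d)) := nCube d ℓ δ (n + 1) with hQdef
  have hxQ : x ∈ Q := hQeq ▸ hx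
  have hx'Q : x' ∈ Q := hQeq ▸ hx'
  set ν := μ.restrict Qᶜ with hν
  -- a.e. facts
  have hae_mem : ∀ᵐ y ∂ν, y ∈ Qᶜ := ae_restrict_mem (hQmeas (n + 1)).compl
  have hae_E : ∀ᵐ y ∂ν, y ∈ E := by
    apply ae_restrict_of_ae
    exact (MeasureTheory.ae_iff).mpr hμEc
  -- distance bounds
  have hdist : ∀ z ∈ Q, ∀ m ≤ n, ∀ y ∈ E, y ∉ nCube d ℓ δ (m + 1) →
      (1 - 2 * τ0) * ℓ m ≤ ‖z - y‖ := by
    intro z hz m hm y hyE hyQ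
    have hz' : z ∈ nCube d ℓ δ (m + 1) := nCube_subset hdec (by omega) hz
    exact sep_from_E hdec hstep (by linarith) (by omega) hz' hyE hyQ
  -- integrability
  have hmeas : ∀ z : EuclideanSpace ℝ (Fin d),
      Measurable (fun y : EuclideanSpace ℝ (Fin d) => (‖z - y‖ ^ (-(s + 1))) • (z - y)) := by
    intro z
    have h1 : Measurable fun y : EuclideanSpace ℝ (Fin d) => z - y :=
      measurable_const.sub measurable_id
    exact (measurable_norm_rpow h1 _).smul h1
  have hr0 : 0 < (1 - 2 * τ0) * ℓ n := mul_pos h2τ (hpos n)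
  have hKbound : ∀ z ∈ Q, ∀ y, y ∈ E → y ∉ Q →
      ‖(‖z - y‖ ^ (-(s + 1))) • (z - y)‖ ≤ ((1 - 2 * τ0) * ℓ n) ^ (-s) := by
    intro z hz y hyE hyQ
    have hdzy : (1 - 2 * τ0) * ℓ n ≤ ‖z - y‖ := hdist z hz n le_rfl y hyE hyQ
    have hzy : 0 < ‖z - y‖ := lt_of_lt_of_le hr0 hdzy
    rw [norm_smul, Real.norm_eq_abs, abs_of_nonneg (Real.rpow_nonneg (norm_nonneg _) _)]
    have he : ‖z - y‖ ^ (-(s + 1)) * ‖z - y‖ = ‖z - y‖ ^ (-s) := by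
      nth_rewrite 2 [← Real.rpow_one ‖z - y‖]
      rw [← Real.rpow_add hzy]
      norm_num
    rw [he]
    exact Real.rpow_le_rpow_of_nonpos hr0 hdzy (by linarith)
  have hint : ∀ z ∈ Q, Integrable
      (fun y : EuclideanSpace ℝ (Fin d) => (‖z - y‖ ^ (-(s + 1))) • (z - y)) ν := by
    intro z hz
    apply Integrable.mono' (integrable_const (((1 - 2 * τ0) * ℓ n) ^ (-s)))
      (hmeas z).aestronglyMeasurable
    filter_upwards [hae_mem, hae_E] with y hyQ hyE
    exact hKbound z hz y hyE hyQ
  have hintx := hint x hxQ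
  have hintx' := hint x' hx'Q
  -- bound on ‖x - x'‖
  have hxx' : ‖x - x'‖ ≤ Real.sqrt d * ℓ (n + 1) := by
    apply my_norm_le_sqrt_mul d (x - x') (ℓ (n + 1)) (hpos _).le
    intro j
    rw [PiLp.sub_apply]
    rw [mem_nCube] at hxQ hx'Q
    have h1 := hxQ j
    have h2 := hx'Q j
    rw [abs_le]
    constructor <;> linarith [h1.1, h1.2, h2.1, h2.2]
  -- the dominating simple function
  set b : ℕ → ℝ := fun m => (s + 2) * ‖x - x'‖ / ((1 - 2 * τ0) * ℓ m) ^ (s + 1) with hb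
  have hbnn : ∀ m, 0 ≤ b m := by
    intro m
    apply div_nonneg (mul_nonneg (by linarith) (norm_nonneg _))
    exact (Real.rpow_pos_of_pos (mul_pos h2τ (hpos m)) _).le
  set H : EuclideanSpace ℝ (Fin d) → ℝ :=
    fun y => ∑ m ∈ range (n + 1), Set.indicator (nCube d ℓ δ m) (fun _ => b m) y with hH
  have hintH : Integrable H ν := by
    apply integrable_finset_sum
    intro m _
    exact (integrable_const (b m)).indicator (hQmeas m)
  -- pointwise a.e. domination
  have haedom : ∀ᵐ y ∂ν,
      ‖(‖x - y‖ ^ (-(s + 1))) • (x - y) - (‖x' - y‖ ^ (-(s + 1))) • (x' - y)‖ ≤ H y := by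
    filter_upwards [hae_mem, hae_E] with y hyQ hyE
    obtain ⟨m, hmn, hym, hym1⟩ := exists_level hdec hyE hyQ
    have hrm : 0 < (1 - 2 * τ0) * ℓ m := mul_pos h2τ (hpos m)
    have hd1 : (1 - 2 * τ0) * ℓ m ≤ ‖x - y‖ := hdist x hxQ m hmn y hyE hym1
    have hd2 : (1 - 2 * τ0) * ℓ m ≤ ‖x' - y‖ := hdist x' hx'Q m hmn y hyE hym1
    have hK := K_smooth hs0 hrm (x - y) (x' - y) hd1 hd2
    rw [sub_sub_sub_cancel_right] at hK
    have hbm : ‖(‖x - y‖ ^ (-(s + 1))) • (x - y) - (‖x' - y‖ ^ (-(s + 1))) • (x' - y)‖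
        ≤ b m := hK
    refine le_trans hbm ?_
    have : Set.indicator (nCube d ℓ δ m) (fun _ => b m) y = b m := by
      rw [Set.indicator_of_mem hym]
    rw [hH, ← this]
    exact Finset.single_le_sum
      (f := fun k => Set.indicator (nCube d ℓ δ k) (fun _ => b k) y)
      (fun k _ => Set.indicator_nonneg (fun _ _ => hbnn k) y)
      (Finset.mem_range.mpr (Nat.lt_succ_of_le hmn))
  -- putting the integral estimates together
  have hno : ‖(∫ y in Qᶜ, (‖x - y‖ ^ (-(s + 1))) • (x - y) ∂μ) -
      (∫ y in Qᶜ, (‖x' - y‖ ^ (-(s + 1))) • (x' - y) ∂μ)‖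
      ≤ ∫ y, H y ∂ν := by
    rw [← integral_sub hintx hintx']
    calc ‖∫ y, ((‖x - y‖ ^ (-(s + 1))) • (x - y) - (‖x' - y‖ ^ (-(s + 1))) • (x' - y)) ∂ν‖
        ≤ ∫ y, ‖(‖x - y‖ ^ (-(s + 1))) • (x - y) - (‖x' - y‖ ^ (-(s + 1))) • (x' - y)‖ ∂ν :=
          norm_integral_le_integral_norm _
      _ ≤ ∫ y, H y ∂ν := integral_mono_ae (hintx.sub hintx').norm hintH haedom
  have hHint : ∫ y, H y ∂ν = ∑ m ∈ range (n + 1), (ν (nCube d ℓ δ m)).toReal * b m := by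
    rw [hH, integral_finset_sum _ (fun m _ => (integrable_const (b m)).indicator (hQmeas m))]
    exact Finset.sum_congr rfl fun m _ => by
      rw [integral_indicator_const _ (hQmeas m), smul_eq_mul, measureReal_def]
  have hνμ : ∀ m, (ν (nCube d ℓ δ m)).toReal ≤ (μ (nCube d ℓ δ m)).toReal := by
    intro m
    apply ENNReal.toReal_le_toReal (measure_ne_top _ _) (measure_ne_top _ _) |>.mpr
    rw [hν, Measure.restrict_apply (hQmeas m)]
    exact measure_mono Set.inter_subset_left
  -- termwise comparison
  have hterm : ∀ m ∈ range (n + 1),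
      (ν (nCube d ℓ δ m)).toReal * b m
        ≤ C * (ℓ (n + 1) / ℓ n) * (((μ (nCube d ℓ δ m)).toReal / ℓ m ^ s) * (ℓ n / ℓ m)) := by
    intro m _
    set T := (μ (nCube d ℓ δ m)).toReal with hT
    have hT0 : 0 ≤ T := ENNReal.toReal_nonneg
    have hνT : (ν (nCube d ℓ δ m)).toReal ≤ T := hνμ m
    have hDpos : 0 < ((1 - 2 * τ0) * ℓ m) ^ (s + 1) :=
      Real.rpow_pos_of_pos (mul_pos h2τ (hpos m)) _
    have hsplitD : ((1 - 2 * τ0) * ℓ m) ^ (s + 1)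
        = (1 - 2 * τ0) ^ (s + 1) * ℓ m ^ (s + 1) :=
      Real.mul_rpow h2τ.le (hpos m).le
    have hℓm1 : ℓ m ^ s * ℓ m = ℓ m ^ (s + 1) := by
      nth_rewrite 2 [← Real.rpow_one (ℓ m)]
      rw [← Real.rpow_add (hpos m)]
    have hRHSform : C * (ℓ (n + 1) / ℓ n) * ((T / ℓ m ^ s) * (ℓ n / ℓ m))
        = (s + 2) * (Real.sqrt d * ℓ (n + 1)) * T / ((1 - 2 * τ0) * ℓ m) ^ (s + 1) := by
      rw [hCdef, hsplitD, ← hℓm1]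
      have h1 : ℓ n ≠ 0 := (hpos n).ne'
      have h2 : ℓ m ≠ 0 := (hpos m).ne'
      have h3 : ℓ m ^ s ≠ 0 := (Real.rpow_pos_of_pos (hpos m) s).ne'
      have h4 : (1 - 2 * τ0) ^ (s + 1) ≠ 0 := (Real.rpow_pos_of_pos h2τ _).ne'
      field_simp
    rw [hRHSform]
    calc (ν (nCube d ℓ δ m)).toReal * b m
        ≤ T * b m := mul_le_mul_of_nonneg_right hνT (hbnn m)
      _ = (s + 2) * ‖x - x'‖ * T / ((1 - 2 * τ0) * ℓ m) ^ (s + 1) := by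
          rw [hb]; ring
      _ ≤ (s + 2) * (Real.sqrt d * ℓ (n + 1)) * T / ((1 - 2 * τ0) * ℓ m) ^ (s + 1) := by
          apply div_le_div_of_nonneg_right _ hDpos.le
          apply mul_le_mul_of_nonneg_right _ hT0
          exact mul_le_mul_of_nonneg_left hxx' (by linarith)
  calc ‖(∫ y in Qᶜ, (‖x - y‖ ^ (-(s + 1))) • (x - y) ∂μ) -
      (∫ y in Qᶜ, (‖x' - y‖ ^ (-(s + 1))) • (x' - y) ∂μ)‖
      ≤ ∫ y, H y ∂ν := hno
    _ = ∑ m ∈ range (n + 1), (ν (nCube d ℓ δ m)).toReal * b m := hHint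
    _ ≤ ∑ m ∈ range (n + 1),
        C * (ℓ (n + 1) / ℓ n) * (((μ (nCube d ℓ δ m)).toReal / ℓ m ^ s) * (ℓ n / ℓ m)) :=
        Finset.sum_le_sum hterm
    _ = C * (ℓ (n + 1) / ℓ n) * ∑ m ∈ range (n + 1),
        ((μ (nCube d ℓ δ m)).toReal / ℓ m ^ s) * (ℓ n / ℓ m) := by
        rw [Finset.mul_sum]
end
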